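/- Let p be an odd prime and n ≥ 1. There exists a Hopf algebra structure over the field Z/p on the polynomial algebra A = (Z/p)[ξ_1, …, ξ_{n−1}] whose comultiplication Δ : A → A ⊗ A is the algebra homomorphism determined by Δ(ξ_k) = Σ_{i=0}^{k} ξ_{k−i}^{p^i} ⊗ ξ_i for 1 ≤ k ≤ n−1 (with the convention ξ_0 = 1), and whose counit is the algebra homomorphism sending every ξ_k to 0. -/

import Mathlib

open TensorProduct

/-- The generators `ξ_0 = 1, ξ_1, …, ξ_{n-1}` of `(Z/p)[ξ_1, …, ξ_{n-1}]`. -/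
noncomputable def xiGen (p n : ℕ) : ℕ → MvPolynomial (Fin (n - 1)) (ZMod p)
  | 0 => 1
  | m + 1 => if h : m < n - 1 then MvPolynomial.X (⟨m, h⟩ : Fin (n - 1)) else 0

section Aux

open Finset

variable (p n : ℕ)

noncomputable def comulA : MvPolynomial (Fin (n-1)) (ZMod p) →ₐ[ZMod p]
    (MvPolynomial (Fin (n-1)) (ZMod p) ⊗[ZMod p] MvPolynomial (Fin (n-1)) (ZMod p)) :=
  MvPolynomial.aeval fun k : Fin (n-1) =>
    ∑ i ∈ range ((k : ℕ) + 2), ((xiGen p n ((k : ℕ) + 1 - i)) ^ (p ^ i)) ⊗ₜ[ZMod p] (xiGen p n i)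

noncomputable def counitA : MvPolynomial (Fin (n-1)) (ZMod p) →ₐ[ZMod p] ZMod p :=
  MvPolynomial.aeval fun _ => 0

lemma comulA_X (k : Fin (n-1)) : comulA p n (MvPolynomial.X k) =
    ∑ i ∈ range ((k : ℕ) + 2), ((xiGen p n ((k : ℕ) + 1 - i)) ^ (p ^ i)) ⊗ₜ[ZMod p] (xiGen p n i) := by
  simp [comulA]

lemma comulA_xiGen {m : ℕ} (hm : m ≤ n - 1) : comulA p n (xiGen p n m) =
    ∑ i ∈ range (m + 1), ((xiGen p n (m - i)) ^ (p ^ i)) ⊗ₜ[ZMod p] (xiGen p n i) := by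
  match m with
  | 0 => simp [xiGen, Algebra.TensorProduct.one_def]
  | m + 1 =>
    have h : m < n - 1 := hm
    rw [show xiGen p n (m+1) = MvPolynomial.X (⟨m, h⟩ : Fin (n-1)) by simp [xiGen, h]]
    simpa using comulA_X p n ⟨m, h⟩

lemma counitA_xiGen (m : ℕ) : counitA p n (xiGen p n m) = if m = 0 then 1 else 0 := by
  match m with
  | 0 => simp [xiGen]
  | m + 1 =>
    simp only [xiGen, counitA]
    split <;> simp

lemma key (K : ℕ) {M : Type*} [AddCommMonoid M] (f : ℕ → ℕ → ℕ → M) :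
    ∑ i ∈ range (K+1), ∑ j ∈ range (K-i+1), f (K-i-j) j i
  = ∑ i ∈ range (K+1), ∑ j ∈ range (i+1), f (K-i) (i-j) j := by
  rw [sum_sigma', sum_sigma']
  apply Finset.sum_nbij' (i := fun x => ⟨x.1 + x.2, x.1⟩)
    (j := fun x => ⟨x.2, x.1 - x.2⟩)
  · rintro ⟨a, b⟩ h
    simp only [mem_sigma, mem_range] at h ⊢; omega
  · rintro ⟨a, b⟩ h
    simp only [mem_sigma, mem_range] at h ⊢; omega
  · rintro ⟨a, b⟩ h
    simp only [mem_sigma, mem_range] at h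
    have : a + b - a = b := by omega
    rw [this]
  · rintro ⟨a, b⟩ h
    simp only [mem_sigma, mem_range] at h
    have : b + (a - b) = a := by omega
    rw [this]
  · rintro ⟨a, b⟩ h
    simp only [mem_sigma, mem_range] at h
    have h1 : K - (a + b) = K - a - b := by omega
    have h2 : a + b - a = b := by omega
    rw [h1, h2]

lemma coassocA (hp : p.Prime) :
    (Algebra.TensorProduct.assoc (ZMod p) (ZMod p) (ZMod p) (MvPolynomial (Fin (n - 1)) (ZMod p))
        (MvPolynomial (Fin (n - 1)) (ZMod p))
        (MvPolynomial (Fin (n - 1)) (ZMod p))).toAlgHom.comp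
      ((Algebra.TensorProduct.map (comulA p n) (AlgHom.id (ZMod p) _)).comp (comulA p n)) =
      (Algebra.TensorProduct.map (AlgHom.id (ZMod p) _) (comulA p n)).comp (comulA p n) := by
  haveI : Fact p.Prime := ⟨hp⟩
  haveI : CharP (MvPolynomial (Fin (n - 1)) (ZMod p) ⊗[ZMod p]
      MvPolynomial (Fin (n - 1)) (ZMod p)) p := charP_of_injective_algebraMap' (ZMod p) p
  apply MvPolynomial.algHom_ext
  intro k
  have hK : (k : ℕ) + 1 ≤ n - 1 := k.isLt
  set ξ := xiGen p n with hξ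
  set K := (k : ℕ) + 1 with hKdef
  simp only [AlgHom.comp_apply, AlgEquiv.toAlgHom_eq_coe, AlgHom.coe_coe]
  rw [comulA_X]
  rw [show (k:ℕ) + 2 = K + 1 from rfl]
  rw [map_sum, map_sum, map_sum]
  have lhs_eq : ∀ i ∈ range (K+1),
      (Algebra.TensorProduct.assoc (ZMod p) (ZMod p) (ZMod p) _ _ _)
        ((Algebra.TensorProduct.map (comulA p n) (AlgHom.id (ZMod p) _))
          (((ξ (K - i)) ^ (p ^ i)) ⊗ₜ[ZMod p] (ξ i))) =
      ∑ j ∈ range (K - i + 1), ((ξ (K-i-j)) ^ (p ^ (j+i))) ⊗ₜ[ZMod p]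
        (((ξ j) ^ (p ^ i)) ⊗ₜ[ZMod p] (ξ i)) := by
    intro i hi
    rw [Algebra.TensorProduct.map_tmul, AlgHom.coe_id, id_eq, map_pow,
      comulA_xiGen p n (le_trans (Nat.sub_le _ _) hK), sum_pow_char_pow,
      TensorProduct.sum_tmul, map_sum]
    refine Finset.sum_congr rfl fun j hj => ?_
    rw [Algebra.TensorProduct.tmul_pow, ← pow_mul, ← pow_add,
      Algebra.TensorProduct.assoc_tmul]
  have rhs_eq : ∀ i ∈ range (K+1),
      (Algebra.TensorProduct.map (AlgHom.id (ZMod p) _) (comulA p n))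
        (((ξ (K - i)) ^ (p ^ i)) ⊗ₜ[ZMod p] (ξ i)) =
      ∑ j ∈ range (i + 1), ((ξ (K-i)) ^ (p ^ i)) ⊗ₜ[ZMod p]
        (((ξ (i-j)) ^ (p ^ j)) ⊗ₜ[ZMod p] (ξ j)) := by
    intro i hi
    simp only [mem_range] at hi
    rw [Algebra.TensorProduct.map_tmul, AlgHom.coe_id, id_eq,
      comulA_xiGen p n (by omega), TensorProduct.tmul_sum]
  refine (Finset.sum_congr rfl lhs_eq).trans ?_
  rw [Finset.sum_congr rfl rhs_eq]
  have := key K (M := MvPolynomial (Fin (n-1)) (ZMod p) ⊗[ZMod p]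
      (MvPolynomial (Fin (n-1)) (ZMod p) ⊗[ZMod p] MvPolynomial (Fin (n-1)) (ZMod p)))
    (fun a b c => ((ξ a) ^ (p ^ (b + c))) ⊗ₜ[ZMod p] (((ξ b) ^ (p ^ c)) ⊗ₜ[ZMod p] (ξ c)))
  rw [this]
  refine Finset.sum_congr rfl fun i hi => Finset.sum_congr rfl fun j hj => ?_
  simp only [mem_range] at hi hj
  have : i - j + j = i := by omega
  rw [this]

-- abbreviations
local notation "Ap" => MvPolynomial (Fin (n-1)) (ZMod p)

lemma mapAlg_eq {B C : Type*} [CommRing B] [CommRing C] [Algebra (ZMod p) B] [Algebra (ZMod p) C]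
    (f : Ap →ₐ[ZMod p] B) (g : Ap →ₐ[ZMod p] C) (x : Ap ⊗[ZMod p] Ap) :
    TensorProduct.map f.toLinearMap g.toLinearMap x = Algebra.TensorProduct.map f g x := by
  induction x with
  | zero => simp
  | tmul a b => simp
  | add a b ha hb => simp [ha, hb]

lemma xiGen_succ_eq (k : Fin (n-1)) : xiGen p n ((k:ℕ)+1) = MvPolynomial.X k := by
  simp [xiGen, k.isLt]

lemma counit_left_alg (hp' : Fact p.Prime) :
    (Algebra.TensorProduct.lid (ZMod p) Ap).toAlgHom.comp
      ((Algebra.TensorProduct.map (counitA p n) (AlgHom.id (ZMod p) Ap)).comp (comulA p n)) =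
    AlgHom.id (ZMod p) Ap := by
  apply MvPolynomial.algHom_ext
  intro k
  simp only [AlgHom.comp_apply, AlgEquiv.toAlgHom_eq_coe, AlgHom.coe_coe, AlgHom.id_apply]
  rw [comulA_X, map_sum, map_sum]
  rw [Finset.sum_eq_single ((k:ℕ)+1)]
  · rw [Algebra.TensorProduct.map_tmul, map_pow, Nat.sub_self, counitA_xiGen]
    simp [xiGen_succ_eq]
  · intro i hi hne
    simp only [mem_range] at hi
    rw [Algebra.TensorProduct.map_tmul, map_pow, counitA_xiGen]
    rw [if_neg (by omega)]
    simp [zero_pow (pow_ne_zero _ hp'.out.ne_zero)]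
  · intro h; simp at h

lemma counit_right_alg :
    (Algebra.TensorProduct.rid (ZMod p) (ZMod p) Ap).toAlgHom.comp
      ((Algebra.TensorProduct.map (AlgHom.id (ZMod p) Ap) (counitA p n)).comp (comulA p n)) =
    AlgHom.id (ZMod p) Ap := by
  apply MvPolynomial.algHom_ext
  intro k
  simp only [AlgHom.comp_apply, AlgEquiv.toAlgHom_eq_coe, AlgHom.coe_coe, AlgHom.id_apply]
  rw [comulA_X, map_sum, map_sum]
  rw [Finset.sum_eq_single 0]
  · rw [Algebra.TensorProduct.map_tmul, counitA_xiGen, if_pos rfl]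
    simp [xiGen_succ_eq]
  · intro i hi hne
    rw [Algebra.TensorProduct.map_tmul, counitA_xiGen, if_neg hne]
    simp
  · intro h; simp at h

noncomputable def sPol (p n : ℕ) : ℕ → MvPolynomial (Fin (n-1)) (ZMod p)
  | 0 => 1
  | K + 1 => -∑ i ∈ Finset.range (K + 1),
      (sPol p n (K - i)) ^ (p ^ (i+1)) * xiGen p n (i+1)
  decreasing_by exact Nat.lt_succ_of_le (Nat.sub_le _ _)

noncomputable def sPol' (p n : ℕ) : ℕ → MvPolynomial (Fin (n-1)) (ZMod p)
  | 0 => 1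
  | K + 1 => -∑ i : Fin (K + 1),
      (xiGen p n (K + 1 - (i:ℕ))) ^ (p ^ (i:ℕ)) * sPol' p n (i:ℕ)
  decreasing_by exact Nat.lt_succ_of_le (Nat.le_of_lt_succ i.isLt)

noncomputable def antipA : MvPolynomial (Fin (n-1)) (ZMod p) →ₐ[ZMod p] Ap :=
  MvPolynomial.aeval fun k : Fin (n-1) => sPol p n ((k:ℕ)+1)

noncomputable def antipA' : MvPolynomial (Fin (n-1)) (ZMod p) →ₐ[ZMod p] Ap :=
  MvPolynomial.aeval fun k : Fin (n-1) => sPol' p n ((k:ℕ)+1)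

lemma antipA_xiGen (m : ℕ) : antipA p n (xiGen p n m) = if m ≤ n - 1 then sPol p n m else 0 := by
  match m with
  | 0 => simp [xiGen, sPol]
  | m + 1 =>
    simp only [xiGen]
    split
    · rw [if_pos (by omega)]; simp [antipA]
    · rw [if_neg (by omega)]; simp

lemma antipA'_xiGen (m : ℕ) : antipA' p n (xiGen p n m) = if m ≤ n - 1 then sPol' p n m else 0 := by
  match m with
  | 0 => simp [xiGen, sPol']
  | m + 1 =>
    simp only [xiGen]
    split
    · rw [if_pos (by omega)]; simp [antipA']
    · rw [if_neg (by omega)]; simp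

lemma antip_left_alg :
    (Algebra.TensorProduct.lmul' (ZMod p) (S := Ap)).comp
      ((Algebra.TensorProduct.map (antipA p n) (AlgHom.id (ZMod p) Ap)).comp (comulA p n)) =
    (Algebra.ofId (ZMod p) Ap).comp (counitA p n) := by
  apply MvPolynomial.algHom_ext
  intro k
  simp only [AlgHom.comp_apply]
  rw [comulA_X, map_sum, map_sum]
  have step : ∀ i ∈ range ((k:ℕ)+2),
      (Algebra.TensorProduct.lmul' (ZMod p) (S := Ap))
        ((Algebra.TensorProduct.map (antipA p n) (AlgHom.id (ZMod p) Ap))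
          (((xiGen p n ((k:ℕ)+1-i)) ^ (p^i)) ⊗ₜ[ZMod p] (xiGen p n i))) =
      (sPol p n ((k:ℕ)+1-i)) ^ (p^i) * xiGen p n i := by
    intro i hi
    rw [Algebra.TensorProduct.map_tmul, map_pow, antipA_xiGen,
      if_pos (le_trans (Nat.sub_le _ _) k.isLt)]
    simp [Algebra.TensorProduct.lmul'_apply_tmul]
  rw [Finset.sum_congr rfl step]
  rw [Finset.sum_range_succ']
  simp only [pow_zero, pow_one, Nat.sub_zero]
  rw [show xiGen p n 0 = 1 from rfl, mul_one]
  rw [show ((k:ℕ)+1 : ℕ) = (k:ℕ)+1 from rfl]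
  rw [show sPol p n ((k:ℕ)+1) = -∑ i ∈ Finset.range ((k:ℕ) + 1),
      (sPol p n ((k:ℕ) - i)) ^ (p ^ (i+1)) * xiGen p n (i+1) by rw [sPol]]
  have : ∀ i ∈ range ((k:ℕ)+1), (sPol p n ((k:ℕ)+1-(i+1))) ^ (p^(i+1)) * xiGen p n (i+1)
      = (sPol p n ((k:ℕ)-i)) ^ (p^(i+1)) * xiGen p n (i+1) := by
    intro i hi
    have h2 : (k:ℕ)+1-(i+1) = (k:ℕ)-i := by omega
    rw [h2]
  rw [Finset.sum_congr rfl this]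
  simp [counitA]

lemma antip_right_alg :
    (Algebra.TensorProduct.lmul' (ZMod p) (S := Ap)).comp
      ((Algebra.TensorProduct.map (AlgHom.id (ZMod p) Ap) (antipA' p n)).comp (comulA p n)) =
    (Algebra.ofId (ZMod p) Ap).comp (counitA p n) := by
  apply MvPolynomial.algHom_ext
  intro k
  simp only [AlgHom.comp_apply]
  rw [comulA_X, map_sum, map_sum]
  have step : ∀ i ∈ range ((k:ℕ)+2),
      (Algebra.TensorProduct.lmul' (ZMod p) (S := Ap))
        ((Algebra.TensorProduct.map (AlgHom.id (ZMod p) Ap) (antipA' p n))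
          (((xiGen p n ((k:ℕ)+1-i)) ^ (p^i)) ⊗ₜ[ZMod p] (xiGen p n i))) =
      (xiGen p n ((k:ℕ)+1-i)) ^ (p^i) * sPol' p n i := by
    intro i hi
    simp only [mem_range] at hi
    rw [Algebra.TensorProduct.map_tmul, antipA'_xiGen, if_pos (by have := k.isLt; omega)]
    simp [Algebra.TensorProduct.lmul'_apply_tmul]
  rw [Finset.sum_congr rfl step]
  rw [Finset.sum_range_succ]
  rw [Nat.sub_self, show xiGen p n 0 = 1 from rfl, one_pow, one_mul]
  rw [show sPol' p n ((k:ℕ)+1) = -∑ i : Fin ((k:ℕ) + 1),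
      (xiGen p n ((k:ℕ) + 1 - (i:ℕ))) ^ (p ^ (i:ℕ)) * sPol' p n (i:ℕ) by rw [sPol']]
  rw [← Finset.sum_range fun i => (xiGen p n ((k:ℕ) + 1 - i)) ^ (p ^ i) * sPol' p n i]
  simp [counitA]

noncomputable def convL (f g : Ap →ₗ[ZMod p] Ap) : Ap →ₗ[ZMod p] Ap :=
  (LinearMap.mul' (ZMod p) Ap) ∘ₗ (TensorProduct.map f g) ∘ₗ (comulA p n).toLinearMap

lemma convL_apply (f g : Ap →ₗ[ZMod p] Ap) (a : Ap) :
    convL p n f g a = (LinearMap.mul' (ZMod p) Ap) (TensorProduct.map f g (comulA p n a)) :=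
  rfl

noncomputable def uL : Ap →ₗ[ZMod p] Ap :=
  (Algebra.linearMap (ZMod p) Ap) ∘ₗ (counitA p n).toLinearMap

lemma counit_left_lin (hp' : Fact p.Prime) (a : Ap) :
    (TensorProduct.lid (ZMod p) Ap)
      (TensorProduct.map (counitA p n).toLinearMap LinearMap.id (comulA p n a)) = a := by
  have h := AlgHom.congr_fun (counit_left_alg p n hp') a
  simp only [AlgHom.comp_apply, AlgEquiv.toAlgHom_eq_coe, AlgHom.coe_coe, AlgHom.id_apply] at h
  rw [show (LinearMap.id : Ap →ₗ[ZMod p] Ap) = (AlgHom.id (ZMod p) Ap).toLinearMap from rfl,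
    mapAlg_eq]
  exact h

lemma counit_right_lin (a : Ap) :
    (TensorProduct.rid (ZMod p) Ap)
      (TensorProduct.map LinearMap.id (counitA p n).toLinearMap (comulA p n a)) = a := by
  have h := AlgHom.congr_fun (counit_right_alg p n) a
  simp only [AlgHom.comp_apply, AlgEquiv.toAlgHom_eq_coe, AlgHom.coe_coe, AlgHom.id_apply] at h
  rw [show (LinearMap.id : Ap →ₗ[ZMod p] Ap) = (AlgHom.id (ZMod p) Ap).toLinearMap from rfl,
    mapAlg_eq]
  rw [show ⇑(TensorProduct.rid (ZMod p) Ap) = ⇑(Algebra.TensorProduct.rid (ZMod p) (ZMod p) Ap) by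
    rw [← AlgebraTensorModule.rid_eq_rid]; rfl]
  exact h

lemma conv_u_left (f : Ap →ₗ[ZMod p] Ap) (hp' : Fact p.Prime) : convL p n (uL p n) f = f := by
  refine LinearMap.ext fun a => ?_
  rw [convL_apply, uL]
  have h1 : TensorProduct.map ((Algebra.linearMap (ZMod p) Ap) ∘ₗ (counitA p n).toLinearMap) f
      = (TensorProduct.map (Algebra.linearMap (ZMod p) Ap) f) ∘ₗ
        (TensorProduct.map (counitA p n).toLinearMap LinearMap.id) := by
    rw [← TensorProduct.map_comp, LinearMap.comp_id]
  rw [h1]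
  have h2 : (LinearMap.mul' (ZMod p) Ap) ∘ₗ (TensorProduct.map (Algebra.linearMap (ZMod p) Ap) f)
      = f ∘ₗ (TensorProduct.lid (ZMod p) Ap).toLinearMap := by
    apply TensorProduct.ext'
    intro c x
    simp only [LinearMap.coe_comp, Function.comp_apply, LinearMap.mul'_apply,
      TensorProduct.map_tmul, Algebra.linearMap_apply, TensorProduct.lid_tmul,
      LinearEquiv.coe_coe, map_smul]
    rw [← Algebra.smul_def]
  exact (LinearMap.congr_fun h2 _).trans (congrArg f (counit_left_lin p n hp' a))

lemma conv_u_right (f : Ap →ₗ[ZMod p] Ap) : convL p n f (uL p n) = f := by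
  refine LinearMap.ext fun a => ?_
  rw [convL_apply, uL]
  have h1 : TensorProduct.map f ((Algebra.linearMap (ZMod p) Ap) ∘ₗ (counitA p n).toLinearMap)
      = (TensorProduct.map f (Algebra.linearMap (ZMod p) Ap)) ∘ₗ
        (TensorProduct.map LinearMap.id (counitA p n).toLinearMap) := by
    rw [← TensorProduct.map_comp, LinearMap.comp_id]
  rw [h1]
  have h2 : (LinearMap.mul' (ZMod p) Ap) ∘ₗ (TensorProduct.map f (Algebra.linearMap (ZMod p) Ap))
      = f ∘ₗ (TensorProduct.rid (ZMod p) Ap).toLinearMap := by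
    apply TensorProduct.ext'
    intro x c
    simp only [LinearMap.coe_comp, Function.comp_apply, LinearMap.mul'_apply,
      TensorProduct.map_tmul, Algebra.linearMap_apply, TensorProduct.rid_tmul,
      LinearEquiv.coe_coe, map_smul]
    rw [mul_comm, ← Algebra.smul_def]
  exact (LinearMap.congr_fun h2 _).trans (congrArg f (counit_right_lin p n a))

lemma coassoc_lin (hp' : Fact p.Prime) (a : Ap) :
    (TensorProduct.assoc (ZMod p) Ap Ap Ap)
      (TensorProduct.map (comulA p n).toLinearMap LinearMap.id (comulA p n a)) =
    TensorProduct.map LinearMap.id (comulA p n).toLinearMap (comulA p n a) := by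
  have h := AlgHom.congr_fun (coassocA p n hp'.out) a
  simp only [AlgHom.comp_apply, AlgEquiv.toAlgHom_eq_coe, AlgHom.coe_coe] at h
  rw [show (LinearMap.id : Ap →ₗ[ZMod p] Ap) = (AlgHom.id (ZMod p) Ap).toLinearMap from rfl,
    mapAlg_eq, mapAlg_eq]
  rw [show ⇑(TensorProduct.assoc (ZMod p) Ap Ap Ap) =
      ⇑(Algebra.TensorProduct.assoc (ZMod p) (ZMod p) (ZMod p) Ap Ap Ap) by
    rw [← AlgebraTensorModule.assoc_eq, ← Algebra.TensorProduct.assoc_toLinearEquiv]; rfl]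
  exact h

lemma conv_assoc (hp' : Fact p.Prime) (f g h : Ap →ₗ[ZMod p] Ap) :
    convL p n (convL p n f g) h = convL p n f (convL p n g h) := by
  set m' : Ap ⊗[ZMod p] Ap →ₗ[ZMod p] Ap := LinearMap.mul' (ZMod p) Ap with hm'
  set Δ : Ap →ₗ[ZMod p] Ap ⊗[ZMod p] Ap := (comulA p n).toLinearMap with hΔ
  set α := (TensorProduct.assoc (ZMod p) Ap Ap Ap).toLinearMap with hα
  have h1 : TensorProduct.map (convL p n f g) h =
      TensorProduct.map m' LinearMap.id ∘ₗ TensorProduct.map (TensorProduct.map f g) h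
        ∘ₗ TensorProduct.map Δ LinearMap.id := by
    apply TensorProduct.ext'
    intro x y
    simp [convL_apply, convL, hm', hΔ]
  have h2 : TensorProduct.map f (convL p n g h) =
      TensorProduct.map LinearMap.id m' ∘ₗ TensorProduct.map f (TensorProduct.map g h)
        ∘ₗ TensorProduct.map LinearMap.id Δ := by
    apply TensorProduct.ext'
    intro x y
    simp [convL_apply, convL, hm', hΔ]
  have h3 : ∀ x, m' (TensorProduct.map m' LinearMap.id x) =
      m' (TensorProduct.map LinearMap.id m' (α x)) := by
    intro x
    have : m' ∘ₗ TensorProduct.map m' LinearMap.id =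
        (m' ∘ₗ TensorProduct.map LinearMap.id m') ∘ₗ α := by
      apply TensorProduct.ext_threefold
      intro a b c
      simp [hm', hα, mul_assoc]
    simpa using LinearMap.congr_fun this x
  have h4 : ∀ x, α (TensorProduct.map (TensorProduct.map f g) h x) =
      TensorProduct.map f (TensorProduct.map g h) (α x) := by
    intro x
    have : α ∘ₗ TensorProduct.map (TensorProduct.map f g) h =
        TensorProduct.map f (TensorProduct.map g h) ∘ₗ α := by
      apply TensorProduct.ext_threefold
      intro a b c
      simp [hα]
    simpa using LinearMap.congr_fun this x
  refine LinearMap.ext fun a => ?_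
  rw [convL_apply, convL_apply, h1, h2]
  simp only [LinearMap.coe_comp, Function.comp_apply]
  rw [h3, h4]
  exact congrArg (fun z => m' (TensorProduct.map LinearMap.id m'
    (TensorProduct.map f (TensorProduct.map g h) z))) (coassoc_lin p n hp' a)

lemma conv_left_antip (hp' : Fact p.Prime) :
    convL p n (antipA p n).toLinearMap LinearMap.id = uL p n := by
  refine LinearMap.ext fun a => ?_
  have h := AlgHom.congr_fun (antip_left_alg p n) a
  simp only [AlgHom.comp_apply] at h
  rw [convL_apply]
  rw [show (LinearMap.id : Ap →ₗ[ZMod p] Ap) = (AlgHom.id (ZMod p) Ap).toLinearMap from rfl,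
    mapAlg_eq]
  rw [show ∀ x, LinearMap.mul' (ZMod p) Ap x = Algebra.TensorProduct.lmul' (ZMod p) (S := Ap) x
    from fun x => by rw [← Algebra.TensorProduct.lmul'_toLinearMap]; rfl]
  rw [h]
  rfl

lemma conv_right_antip' (hp' : Fact p.Prime) :
    convL p n LinearMap.id (antipA' p n).toLinearMap = uL p n := by
  refine LinearMap.ext fun a => ?_
  have h := AlgHom.congr_fun (antip_right_alg p n) a
  simp only [AlgHom.comp_apply] at h
  rw [convL_apply]
  rw [show (LinearMap.id : Ap →ₗ[ZMod p] Ap) = (AlgHom.id (ZMod p) Ap).toLinearMap from rfl,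
    mapAlg_eq]
  rw [show ∀ x, LinearMap.mul' (ZMod p) Ap x = Algebra.TensorProduct.lmul' (ZMod p) (S := Ap) x
    from fun x => by rw [← Algebra.TensorProduct.lmul'_toLinearMap]; rfl]
  rw [h]
  rfl

lemma antip_eq (hp' : Fact p.Prime) : (antipA p n).toLinearMap = (antipA' p n).toLinearMap := by
  calc (antipA p n).toLinearMap
      = convL p n (antipA p n).toLinearMap (uL p n) := (conv_u_right p n _).symm
    _ = convL p n (antipA p n).toLinearMap (convL p n LinearMap.id (antipA' p n).toLinearMap) := by
        rw [conv_right_antip' p n hp']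
    _ = convL p n (convL p n (antipA p n).toLinearMap LinearMap.id) (antipA' p n).toLinearMap := by
        rw [conv_assoc p n hp']
    _ = convL p n (uL p n) (antipA' p n).toLinearMap := by rw [conv_left_antip p n hp']
    _ = (antipA' p n).toLinearMap := conv_u_left p n _ hp'


end Aux

/-- For an odd prime `p` and `n ≥ 1`, there is a Hopf algebra structure over
`Z/p` on the polynomial algebra `A = (Z/p)[ξ_1, …, ξ_{n-1}]` whose comultiplication is the
algebra homomorphism `Δ` determined by `Δ(ξ_k) = Σ_{i=0}^{k} ξ_{k-i}^(p^i) ⊗ ξ_i`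
(with `ξ_0 = 1`) and whose counit is the algebra homomorphism sending every `ξ_k` to `0`.
Here the Hopf algebra structure is spelled out: a comultiplication and counit which are
algebra homomorphisms, coassociative, counital, together with an antipode. -/
theorem stmt_3 (p n : ℕ) (hp : p.Prime) (hodd : Odd p) (hn : 1 ≤ n) :
    ∃ (comul : MvPolynomial (Fin (n - 1)) (ZMod p) →ₐ[ZMod p]
        (MvPolynomial (Fin (n - 1)) (ZMod p) ⊗[ZMod p] MvPolynomial (Fin (n - 1)) (ZMod p)))
      (counit : MvPolynomial (Fin (n - 1)) (ZMod p) →ₐ[ZMod p] ZMod p)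
      (antipode : MvPolynomial (Fin (n - 1)) (ZMod p) →ₗ[ZMod p]
        MvPolynomial (Fin (n - 1)) (ZMod p)),
      -- the comultiplication takes the prescribed values on the generators
      (∀ k : Fin (n - 1),
        comul (MvPolynomial.X k) =
          ∑ i ∈ Finset.range ((k : ℕ) + 2),
            ((xiGen p n ((k : ℕ) + 1 - i)) ^ (p ^ i)) ⊗ₜ[ZMod p] (xiGen p n i)) ∧
      -- the counit sends every generator to 0
      (∀ k : Fin (n - 1), counit (MvPolynomial.X k) = 0) ∧
      -- coassociativity
      ((Algebra.TensorProduct.assoc (ZMod p) (ZMod p) (ZMod p) (MvPolynomial (Fin (n - 1)) (ZMod p))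
          (MvPolynomial (Fin (n - 1)) (ZMod p))
          (MvPolynomial (Fin (n - 1)) (ZMod p))).toAlgHom.comp
        ((Algebra.TensorProduct.map comul (AlgHom.id (ZMod p) _)).comp comul) =
        (Algebra.TensorProduct.map (AlgHom.id (ZMod p) _) comul).comp comul) ∧
      -- counit laws
      (∀ a, (TensorProduct.lid (ZMod p) (MvPolynomial (Fin (n - 1)) (ZMod p)))
          ((TensorProduct.map counit.toLinearMap LinearMap.id) (comul a)) = a) ∧
      (∀ a, (TensorProduct.rid (ZMod p) (MvPolynomial (Fin (n - 1)) (ZMod p)))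
          ((TensorProduct.map LinearMap.id counit.toLinearMap) (comul a)) = a) ∧
      -- antipode laws
      (∀ a, (LinearMap.mul' (ZMod p) (MvPolynomial (Fin (n - 1)) (ZMod p)))
          ((TensorProduct.map antipode LinearMap.id) (comul a)) =
          algebraMap (ZMod p) (MvPolynomial (Fin (n - 1)) (ZMod p)) (counit a)) ∧
      (∀ a, (LinearMap.mul' (ZMod p) (MvPolynomial (Fin (n - 1)) (ZMod p)))
          ((TensorProduct.map LinearMap.id antipode) (comul a)) =
          algebraMap (ZMod p) (MvPolynomial (Fin (n - 1)) (ZMod p)) (counit a)) := by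
  haveI hp' : Fact p.Prime := ⟨hp⟩
  refine ⟨comulA p n, counitA p n, (antipA p n).toLinearMap, ?_, ?_, ?_, ?_, ?_, ?_, ?_⟩
  · exact comulA_X p n
  · intro k; simp [counitA]
  · exact coassocA p n hp
  · exact counit_left_lin p n hp'
  · exact counit_right_lin p n
  · intro a
    have := LinearMap.congr_fun (conv_left_antip p n hp') a
    rw [convL_apply] at this
    rw [this]
    rfl
  · intro a
    have h := antip_eq p n hp'
    have := LinearMap.congr_fun (conv_right_antip' p n hp') a
    rw [convL_apply] at this
    rw [h, this]
    rfl
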